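/- Suppose the fixed space Fix_V(G) of a finite group G ≤ GL(Λ) acting on V has dimension 1. Then for any point z, there is at most one point w in the orbit of z under the normalizer N_{GL(Λ)}(G) such that w ≠ z and w is translation equivalent to z (i.e., w − z ∈ Fix_Λ(G)). -/

import Mathlib

/-- Conjugation by a normalizer element as a permutation of the subgroup. -/
def conjEquiv {H : Type*} [Group H] (G : Subgroup H) (S : H) (hS : S ∈ Subgroup.normalizer (G : Set H)) :
    G ≃ G where
  toFun g := ⟨S * g * S⁻¹, (Subgroup.mem_normalizer_iff.mp hS g).mp g.2⟩
  invFun g := ⟨S⁻¹ * g * S, (Subgroup.mem_normalizer_iff.mp hS (S⁻¹ * g * S)).mpr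
    (by convert g.2 using 1; group)⟩
  left_inv g := by ext; simp only; group
  right_inv g := by ext; simp only; group

/-- Auxiliary: summing over a finite subgroup, conjugation by a normalizer element
is a reindexing. -/
lemma sum_conj_normalizer {M : Type*} [AddCommMonoid M] {H : Type*} [Group H]
    (G : Subgroup H) [Fintype G] (S : H) (hS : S ∈ Subgroup.normalizer (G : Set H)) (f : H → M) :
    ∑ g : G, f (S * g) = ∑ g : G, f (g * S) := by
  refine Fintype.sum_equiv (conjEquiv G S hS)
    (fun g : G => f (S * (g : H))) (fun g : G => f ((g : H) * S)) (fun g => ?_)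
  show f (S * (g : H)) = f ((S * g * S⁻¹) * S)
  congr 1
  group

/-- If the fixed space of `G` on `V` is one-dimensional, then for any point `z`
there is at most one point `w` in the orbit of `z` under the normalizer of `G` in `GL(Λ)`
with `w ≠ z` and `w` translation equivalent to `z` (i.e. `w - z ∈ Fix_Λ(G)`). -/
theorem stmt_1 {V : Type*} [AddCommGroup V] [Module ℝ V] [FiniteDimensional ℝ V]
    {ι : Type*} [Fintype ι] (bV : Module.Basis ι ℝ V)
    (Λ : Submodule ℤ V) (hΛ : (Λ : Set V) = ↑(Submodule.span ℤ (Set.range ⇑bV)))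
    (G : Subgroup (V ≃ₗ[ℝ] V)) (hGfin : Finite G)
    (hGΛ : ∀ g ∈ G, ⇑g '' (Λ : Set V) = (Λ : Set V))
    (F : Submodule ℝ V) (hF : ∀ v, v ∈ F ↔ ∀ g ∈ G, g v = v)
    (hdim : Module.finrank ℝ F = 1)
    (z : V) :
    ∀ w₁ w₂ : V,
      ((∃ S : V ≃ₗ[ℝ] V, ⇑S '' (Λ : Set V) = (Λ : Set V) ∧ S ∈ Subgroup.normalizer (G : Set (V ≃ₗ[ℝ] V)) ∧ w₁ = S z) ∧
        w₁ ≠ z ∧ w₁ - z ∈ Λ ∧ w₁ - z ∈ F) →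
      ((∃ S : V ≃ₗ[ℝ] V, ⇑S '' (Λ : Set V) = (Λ : Set V) ∧ S ∈ Subgroup.normalizer (G : Set (V ≃ₗ[ℝ] V)) ∧ w₂ = S z) ∧
        w₂ ≠ z ∧ w₂ - z ∈ Λ ∧ w₂ - z ∈ F) →
      w₁ = w₂ := by
  haveI : Fintype G := Fintype.ofFinite G
  set n : ℕ := Fintype.card G with hn
  have hnpos : 0 < n := Fintype.card_pos
  -- the averaging projection onto F
  set e : V → V := fun v => (n : ℝ)⁻¹ • ∑ g : G, (g : V ≃ₗ[ℝ] V) v with he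
  -- e v is fixed by every element of G
  have hge : ∀ h : G, ∀ v : V, (h : V ≃ₗ[ℝ] V) (e v) = e v := by
    intro h v
    simp only [he, map_smul, map_sum]
    congr 1
    have := Equiv.sum_comp (Equiv.mulLeft h) (fun g : G => (g : V ≃ₗ[ℝ] V) v)
    calc ∑ g : G, (h : V ≃ₗ[ℝ] V) ((g : V ≃ₗ[ℝ] V) v)
        = ∑ g : G, ((Equiv.mulLeft h g : G) : V ≃ₗ[ℝ] V) v := by
          refine Finset.sum_congr rfl fun g _ => ?_
          rfl
      _ = ∑ g : G, (g : V ≃ₗ[ℝ] V) v := this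
  have heF : ∀ v : V, e v ∈ F := fun v => (hF _).mpr fun g hg => hge ⟨g, hg⟩ v
  have hFe : ∀ v ∈ F, e v = v := by
    intro v hv
    simp only [he]
    have hgv : ∀ g : G, (g : V ≃ₗ[ℝ] V) v = v := fun g => (hF v).mp hv g g.2
    rw [Finset.sum_congr rfl fun g _ => hgv g, Finset.sum_const, Finset.card_univ,
      ← hn, ← Nat.cast_smul_eq_nsmul ℝ, smul_smul,
      inv_mul_cancel₀ (by positivity : (n : ℝ) ≠ 0), one_smul]
  have hmemF : ∀ v : V, v ∈ F ↔ e v = v := fun v => ⟨hFe v, fun h => h ▸ heF v⟩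
  -- e commutes with normalizer elements
  have hcomm : ∀ S : V ≃ₗ[ℝ] V, S ∈ Subgroup.normalizer (G : Set (V ≃ₗ[ℝ] V)) → ∀ v : V, S (e v) = e (S v) := by
    intro S hS v
    simp only [he, map_smul, map_sum]
    congr 1
    exact sum_conj_normalizer G S hS (fun h : V ≃ₗ[ℝ] V => h v)
  -- integrality of lattice coordinates
  have hint : ∀ x ∈ Λ, ∀ i, ∃ m : ℤ, bV.repr x i = (m : ℝ) := by
    intro x hx i
    have hx' : x ∈ Submodule.span ℤ (Set.range ⇑bV) := by
      have hxm : x ∈ (Λ : Set V) := hx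
      rw [hΛ] at hxm
      exact hxm
    obtain ⟨m, hm⟩ := (bV.mem_span_iff_repr_mem ℤ x).mp hx' i
    exact ⟨m, by simpa using hm.symm⟩
  -- additivity of e
  have headd : ∀ v w : V, e (v + w) = e v + e w := by
    intro v w
    simp only [he, map_add, Finset.sum_add_distrib, smul_add]
  -- helper inequality
  have hinv_le : ∀ x y : ℝ, 0 < x → 1 ≤ x * y → x⁻¹ ≤ y := by
    intro x y hx h
    have h1 : x * x⁻¹ ≤ x * y := by rw [mul_inv_cancel₀ hx.ne']; exact h
    exact le_of_mul_le_mul_left h1 hx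
  -- KEY: every admissible w equals z - e z - e z
  have key : ∀ w : V,
      ((∃ S : V ≃ₗ[ℝ] V, ⇑S '' (Λ : Set V) = (Λ : Set V) ∧ S ∈ Subgroup.normalizer (G : Set (V ≃ₗ[ℝ] V)) ∧ w = S z) ∧
        w ≠ z ∧ w - z ∈ Λ ∧ w - z ∈ F) → w = z - e z - e z := by
    rintro w ⟨⟨S, hSΛ, hSN, rfl⟩, hne, hL1, hL2⟩
    set lam : V := S z - z with hlam
    have hlam0 : lam ≠ 0 := sub_ne_zero.mpr hne
    have hSmem : ∀ x ∈ Λ, S x ∈ Λ := by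
      intro x hx
      have hx2 : S x ∈ ⇑S '' (Λ : Set V) := Set.mem_image_of_mem _ hx
      rwa [hSΛ] at hx2
    have hSinvmem : ∀ x ∈ Λ, S.symm x ∈ Λ := by
      intro x hx
      have hx2 : x ∈ ⇑S '' (Λ : Set V) := by rw [hSΛ]; exact hx
      obtain ⟨y, hy, rfl⟩ := hx2
      simpa using hy
    -- F = span {lam}
    have hspan : Submodule.span ℝ {lam} = F := by
      apply Submodule.eq_of_le_of_finrank_le
      · rw [Submodule.span_le, Set.singleton_subset_iff]; exact hL2
      · rw [hdim, finrank_span_singleton hlam0]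
    -- S lam ∈ F
    have hSlamF : S lam ∈ F := by
      rw [hmemF]
      rw [← hcomm S hSN lam, hFe lam hL2]
    obtain ⟨c, hc⟩ : ∃ c : ℝ, c • lam = S lam := by
      rw [← hspan] at hSlamF
      exact Submodule.mem_span_singleton.mp hSlamF
    have hc0 : c ≠ 0 := by
      rintro rfl
      rw [zero_smul] at hc
      exact hlam0 (S.injective (by simpa using hc.symm))
    -- S.symm lam = c⁻¹ • lam
    have hcinv : c⁻¹ • lam = S.symm lam := by
      apply S.injective
      rw [map_smul, S.apply_symm_apply, ← hc, smul_smul, inv_mul_cancel₀ hc0, one_smul]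
    -- powers stay in the lattice
    have hpow : ∀ k : ℕ, (c ^ k) • lam ∈ Λ := by
      intro k
      induction k with
      | zero => simpa using hL1
      | succ k ih =>
        have h3 := hSmem _ ih
        rw [map_smul, ← hc, smul_smul] at h3
        have h4 : c ^ (k + 1) = c ^ k * c := by ring
        rw [h4]; exact h3
    have hpowinv : ∀ k : ℕ, (c⁻¹ ^ k) • lam ∈ Λ := by
      intro k
      induction k with
      | zero => simpa using hL1
      | succ k ih =>
        have h3 := hSinvmem _ ih
        rw [map_smul, ← hcinv, smul_smul] at h3
        have h4 : c⁻¹ ^ (k + 1) = c⁻¹ ^ k * c⁻¹ := by ring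
        rw [h4]; exact h3
    -- pick a nonzero integer coordinate of lam
    obtain ⟨i, hi⟩ : ∃ i, bV.repr lam i ≠ 0 := by
      by_contra h
      push_neg at h
      apply hlam0
      have h4 : bV.repr lam = 0 := Finsupp.ext h
      simpa using bV.repr.injective (by simpa using h4)
    obtain ⟨m, hm⟩ := hint lam hL1 i
    have hm0 : (m : ℝ) ≠ 0 := hm ▸ hi
    have hm1 : (1 : ℝ) ≤ |(m : ℝ)| := by
      rw [← Int.cast_abs, ← Int.cast_one, Int.cast_le]
      exact Int.one_le_abs (by exact_mod_cast hm0)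
    -- coordinate bounds for powers
    have hbound : ∀ d : ℝ, d ≠ 0 → (∀ k : ℕ, (d ^ k) • lam ∈ Λ) →
        ∀ k : ℕ, 1 ≤ |d| ^ k * |(m : ℝ)| := by
      intro d hd hmemd k
      obtain ⟨m', hm'⟩ := hint _ (hmemd k) i
      have hrepr : bV.repr ((d ^ k) • lam) i = d ^ k * bV.repr lam i := by
        rw [map_smul]; simp [smul_eq_mul]
      rw [hm', hm] at hrepr
      have hne' : (m' : ℝ) ≠ 0 := by
        rw [hrepr]
        exact mul_ne_zero (pow_ne_zero _ hd) hm0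
      have h5 : (1 : ℝ) ≤ |(m' : ℝ)| := by
        rw [← Int.cast_abs, ← Int.cast_one, Int.cast_le]
        exact Int.one_le_abs (by exact_mod_cast hne')
      calc (1 : ℝ) ≤ |(m' : ℝ)| := h5
        _ = |d ^ k * (m : ℝ)| := by rw [hrepr]
        _ = |d| ^ k * |(m : ℝ)| := by rw [abs_mul, abs_pow]
    have hub : ∀ k : ℕ, |c| ^ k ≤ |(m : ℝ)| := by
      intro k
      have h1 := hbound c⁻¹ (inv_ne_zero hc0) hpowinv k
      have h2 := hinv_le _ _ (pow_pos (abs_pos.mpr (inv_ne_zero hc0)) k) h1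
      rwa [abs_inv, inv_pow, inv_inv] at h2
    have hubinv : ∀ k : ℕ, |c⁻¹| ^ k ≤ |(m : ℝ)| := by
      intro k
      have h1 := hbound c hc0 hpow k
      have h2 := hinv_le _ _ (pow_pos (abs_pos.mpr hc0) k) h1
      rwa [abs_inv, inv_pow]
    have habs : |c| = 1 := by
      by_contra h
      rcases lt_or_gt_of_ne h with hlt | hgt
      · have hgt' : 1 < |c⁻¹| := by
          rw [abs_inv, one_lt_inv_iff₀]
          exact ⟨abs_pos.mpr hc0, hlt⟩
        obtain ⟨k, hk⟩ := pow_unbounded_of_one_lt |(m : ℝ)| hgt'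
        exact absurd (hubinv k) (not_le.mpr hk)
      · obtain ⟨k, hk⟩ := pow_unbounded_of_one_lt |(m : ℝ)| hgt
        exact absurd (hub k) (not_le.mpr hk)
    -- analyze S on u = e z
    have hSu : S (e z) = e z + lam := by
      rw [hcomm S hSN z]
      have hz : S z = z + lam := by rw [hlam]; abel
      rw [hz, headd, hFe lam hL2]
    have huspan : e z ∈ Submodule.span ℝ {lam} := by rw [hspan]; exact heF z
    obtain ⟨a, ha⟩ := Submodule.mem_span_singleton.mp huspan
    have hScu : S (e z) = c • e z := by
      rw [← ha, map_smul, ← hc, smul_smul, smul_smul, mul_comm]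
    rcases (abs_eq (by norm_num : (0:ℝ) ≤ 1)).mp habs with h1 | h1
    · exfalso
      rw [h1, one_smul] at hScu
      have h6 : e z + lam = e z := hSu.symm.trans hScu
      exact hlam0 (by simpa using h6)
    · rw [h1, neg_one_smul] at hScu
      have h6 : e z + lam = -e z := hSu.symm.trans hScu
      have h7 : lam = -e z - e z := by rw [← h6]; abel
      have h8 : S z = z + lam := by rw [hlam]; abel
      rw [h8, h7]; abel
  intro w₁ w₂ h1 h2
  rw [key w₁ h1, key w₂ h2]
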